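/- Let ∂ be the unique ℤ-linear derivation on ℤ[x_1,…,x_n] with ∂(x_i) = x_i² for all i, and let h_j denote the j-th complete homogeneous symmetric polynomial in x_1,…,x_n. Then for every i ≥ 1, ∂(h_i) = (i+1)·h_{i+1} − h_1·h_i. -/

import Mathlib

open MvPolynomial

variable {n : ℕ}

private lemma multiset_prod_X (m : Multiset (Fin n)) :
    (m.map (X (R := ℤ))).prod = monomial m.toFinsupp 1 := by
  induction m using Multiset.induction_on with
  | empty => simp [Multiset.toFinsupp_zero, monomial_zero']
  | cons a m ih =>
      rw [Multiset.map_cons, Multiset.prod_cons, ih]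
      rw [show ((a ::ₘ m).toFinsupp) = Finsupp.single a 1 + m.toFinsupp by
        rw [← Multiset.singleton_add, Multiset.toFinsupp_add, Multiset.toFinsupp_singleton]]
      simp [X, monomial_mul]

private lemma hsymm_eq (k : ℕ) :
    hsymm (Fin n) ℤ k = ∑ s : Sym (Fin n) k, monomial (Multiset.toFinsupp s.1) 1 := by
  unfold hsymm
  exact Finset.sum_congr rfl fun s _ => multiset_prod_X s.1

private lemma sum_count (m : Multiset (Fin n)) :
    ∑ j : Fin n, m.count j = Multiset.card m := by
  induction m using Multiset.induction_on with
  | empty => simp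
  | cons a m ih => simp [Multiset.count_cons, Finset.sum_add_distrib, ih, add_comm]

/-- For the derivation `∂` on `ℤ[x_1,…,x_n]` with `∂(x_i) = x_i²` and the
complete homogeneous symmetric polynomials `h_j`, one has `∂(h_i) = (i+1)·h_{i+1} - h₁·h_i`
for `i ≥ 1`. -/
theorem derivation_hsymm (n : ℕ)
    (D : Derivation ℤ (MvPolynomial (Fin n) ℤ) (MvPolynomial (Fin n) ℤ))
    (hD : ∀ i, D (X i) = X i ^ 2) :
    ∀ i : ℕ, 1 ≤ i →
      D (hsymm (Fin n) ℤ i) =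
        (i + 1) • hsymm (Fin n) ℤ (i + 1) - hsymm (Fin n) ℤ 1 * hsymm (Fin n) ℤ i := by
  intro i _
  -- identify D
  have hDeq : D = mkDerivation ℤ (fun j : Fin n => X j ^ 2) :=
    derivation_ext fun j => by rw [hD, mkDerivation_X]
  -- D on a monomial
  have hDmon : ∀ d : Fin n →₀ ℕ, D (monomial d (1 : ℤ)) =
      ∑ j : Fin n, (d j) • monomial (d + Finsupp.single j 1) (1 : ℤ) := by
    intro d
    rw [hDeq, mkDerivation_monomial, one_smul]
    rw [Finsupp.sum_fintype _ _ (by intro j; simp)]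
    refine Finset.sum_congr rfl fun j _ => ?_
    rcases Nat.eq_zero_or_pos (d j) with h | h
    · simp [h]
    · have : d - Finsupp.single j 1 + Finsupp.single j 2 = d + Finsupp.single j 1 := by
        ext a
        rcases eq_or_ne a j with rfl | ha
        · simp only [Finsupp.add_apply, Finsupp.tsub_apply, Finsupp.single_eq_same]; omega
        · simp [Finsupp.add_apply, Finsupp.tsub_apply, Finsupp.single_eq_of_ne' (Ne.symm ha)]
      rw [show (X j : MvPolynomial (Fin n) ℤ) ^ 2 = monomial (Finsupp.single j 2) 1 by
            simp [X_pow_eq_monomial]]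
      rw [smul_eq_mul, monomial_mul, this, mul_one]
      rw [show (monomial (d + Finsupp.single j 1)) ((d j : ℤ)) =
          (d j) • monomial (d + Finsupp.single j 1) (1:ℤ) by
        rw [← map_nsmul]; simp]
  -- abbreviation
  set M : (Fin n →₀ ℕ) → MvPolynomial (Fin n) ℤ := fun d => monomial d 1 with hM
  -- compute D (hsymm i)
  have h1 : D (hsymm (Fin n) ℤ i) =
      ∑ s : Sym (Fin n) i, ∑ j : Fin n,
        (s.1.count j) • M (s.1.toFinsupp + Finsupp.single j 1) := by
    rw [hsymm_eq i, map_sum]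
    refine Finset.sum_congr rfl fun s _ => ?_
    rw [hDmon]
    refine Finset.sum_congr rfl fun j _ => ?_
    rw [Multiset.toFinsupp_apply]
  -- compute hsymm 1 * hsymm i
  have h2 : hsymm (Fin n) ℤ 1 * hsymm (Fin n) ℤ i =
      ∑ s : Sym (Fin n) i, ∑ j : Fin n, M (s.1.toFinsupp + Finsupp.single j 1) := by
    rw [hsymm_one, hsymm_eq i, Finset.sum_mul_sum, Finset.sum_comm]
    refine Finset.sum_congr rfl fun s _ => Finset.sum_congr rfl fun j _ => ?_
    simp only [hM, X, monomial_mul, one_mul, add_comm]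
  -- the combined sum
  have key : ∀ j : Fin n,
      (∑ s : Sym (Fin n) i, (((j ::ₛ s) : Sym (Fin n) (i+1)).1.count j) •
          M ((j ::ₛ s).1.toFinsupp)) =
      ∑ t : Sym (Fin n) (i+1), (t.1.count j) • M (t.1.toFinsupp) := by
    intro j
    rw [← Finset.sum_filter_of_ne (p := fun t : Sym (Fin n) (i+1) => j ∈ t)
      (by intro t _ h; by_contra hm; exact h (by
        rw [Multiset.count_eq_zero_of_notMem (by simpa [Sym.mem_coe] using hm), zero_smul]))]
    refine Finset.sum_bij' (fun s _ => j ::ₛ s)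
      (fun t ht => t.erase j (by simpa using (Finset.mem_filter.mp ht).2)) ?_ ?_ ?_ ?_ ?_
    · intro s _; simp [Sym.mem_cons_self]
    · intro t ht; exact Finset.mem_univ _
    · intro s _; exact Sym.erase_cons_head s j
    · intro t ht; exact Sym.cons_erase _
    · intro s _; rfl
  -- put things together
  have main : D (hsymm (Fin n) ℤ i) + hsymm (Fin n) ℤ 1 * hsymm (Fin n) ℤ i =
      (i + 1) • hsymm (Fin n) ℤ (i + 1) := by
    rw [h1, h2, ← Finset.sum_add_distrib]
    have step : ∀ s : Sym (Fin n) i,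
        ((∑ j : Fin n, (s.1.count j) • M (s.1.toFinsupp + Finsupp.single j 1)) +
          ∑ j : Fin n, M (s.1.toFinsupp + Finsupp.single j 1)) =
        ∑ j : Fin n, (((j ::ₛ s) : Sym (Fin n) (i+1)).1.count j) • M ((j ::ₛ s).1.toFinsupp) := by
      intro s
      rw [← Finset.sum_add_distrib]
      refine Finset.sum_congr rfl fun j _ => ?_
      have hc : ((j ::ₛ s) : Sym (Fin n) (i+1)).1 = j ::ₘ s.1 := rfl
      rw [hc, Multiset.count_cons_self,
        show ((j ::ₘ s.1).toFinsupp) = s.1.toFinsupp + Finsupp.single j 1 by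
          rw [← Multiset.singleton_add, Multiset.toFinsupp_add, Multiset.toFinsupp_singleton,
            add_comm],
        succ_nsmul]
    rw [Finset.sum_congr rfl fun s _ => step s, Finset.sum_comm,
      Finset.sum_congr rfl fun j (_ : j ∈ Finset.univ) => key j, Finset.sum_comm,
      hsymm_eq (i+1), Finset.smul_sum]
    refine Finset.sum_congr rfl fun t _ => ?_
    rw [← Finset.sum_smul, sum_count, t.2]
  rw [eq_sub_iff_add_eq]
  exact main
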